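/- For all u ∈ (0,1] and v ∈ [0,1] one has V(u,v) ≤ 8uv(1 + log(1/u)). -/

import Mathlib

open Real Set

noncomputable section

/-- The Fourier coefficient `a_{m,n} = (32/π⁴) · 1/((2m+1)(2n+1)) · 1/((2m+1)² + (2n+1)²)`. -/
def Vcoef (m n : ℕ) : ℝ :=
  32 / Real.pi ^ 4 * (1 / ((2 * m + 1) * (2 * n + 1)))
    * (1 / ((2 * (m:ℝ) + 1) ^ 2 + (2 * (n:ℝ) + 1) ^ 2))

/-- The `(m,n)` term of the double Fourier series defining `V`. -/
def Vterm (u v : ℝ) (m n : ℕ) : ℝ :=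
  Vcoef m n * Real.sin ((2 * m + 1) * Real.pi * u) * Real.sin ((2 * n + 1) * Real.pi * v)

/-- `V(u,v) = Σ_m Σ_n a_{m,n} sin((2m+1)πu) sin((2n+1)πv)`. -/
def V (u v : ℝ) : ℝ := ∑' m : ℕ, ∑' n : ℕ, Vterm u v m n

namespace VAux

lemma abs_sin_le_rpow {x θ : ℝ} (hx : 0 < x) (h0 : 0 ≤ θ) (h1 : θ ≤ 1) :
    |Real.sin x| ≤ x ^ θ := by
  rcases le_total x 1 with h | h
  · calc |Real.sin x| ≤ |x| := Real.abs_sin_le_abs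
      _ = x ^ (1:ℝ) := by rw [abs_of_pos hx, Real.rpow_one]
      _ ≤ x ^ θ := Real.rpow_le_rpow_of_exponent_ge hx h h1
  · calc |Real.sin x| ≤ 1 := Real.abs_sin_le_one x
      _ ≤ x ^ θ := Real.one_le_rpow h h0

lemma arctan_step {a b : ℝ} (h0 : 0 ≤ a) (hab : a < b) :
    (b - a) / (1 + b ^ 2) ≤ Real.arctan b - Real.arctan a := by
  obtain ⟨c, hc, hceq⟩ := exists_hasDerivAt_eq_slope Real.arctan (fun x => 1 / (1 + x ^ 2)) hab
    Real.continuous_arctan.continuousOn (fun x _ => Real.hasDerivAt_arctan x)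
  have hba : 0 < b - a := by linarith
  have hc1 : 0 < 1 + c ^ 2 := by positivity
  have heq : Real.arctan b - Real.arctan a = (b - a) / (1 + c ^ 2) := by
    rw [eq_div_iff (ne_of_gt hc1)]
    field_simp at hceq
    linarith [hceq]
  rw [heq]
  have hc2 : c ^ 2 ≤ b ^ 2 := by nlinarith [hc.1, hc.2]
  gcongr

lemma rpow_step {δ a b : ℝ} (hδ : 0 < δ) (ha : 0 < a) (hab : a < b) :
    δ * (b - a) * b ^ (-(1 + δ)) ≤ a ^ (-δ) - b ^ (-δ) := by
  have hb : 0 < b := ha.trans hab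
  have hd : ∀ x ∈ Ioo a b, HasDerivAt (fun y : ℝ => y ^ (-δ)) (-δ * x ^ (-δ - 1)) x := by
    intro x hx
    exact Real.hasDerivAt_rpow_const (Or.inl (ne_of_gt (ha.trans hx.1)))
  have hcont : ContinuousOn (fun y : ℝ => y ^ (-δ)) (Icc a b) := by
    intro x hx
    exact (Real.continuousAt_rpow_const x (-δ)
      (Or.inl (ne_of_gt (lt_of_lt_of_le ha hx.1)))).continuousWithinAt
  obtain ⟨c, hc, hceq⟩ := exists_hasDerivAt_eq_slope (fun y : ℝ => y ^ (-δ))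
    (fun x => -δ * x ^ (-δ - 1)) hab hcont hd
  have hba : 0 < b - a := by linarith
  have hcpos : 0 < c := ha.trans hc.1
  have heq : a ^ (-δ) - b ^ (-δ) = δ * c ^ (-δ - 1) * (b - a) := by
    have h2 : -δ * c ^ (-δ - 1) * (b - a) = b ^ (-δ) - a ^ (-δ) := by
      rw [hceq]; field_simp
    linarith [h2]
  have hmono : b ^ (-δ - 1) ≤ c ^ (-δ - 1) :=
    Real.rpow_le_rpow_of_nonpos hcpos hc.2.le (by linarith)
  have hexp : -(1 + δ) = -δ - 1 := by ring
  rw [heq, hexp]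
  nlinarith [mul_le_mul_of_nonneg_left hmono (by positivity : (0:ℝ) ≤ δ * (b - a))]

lemma sum_inv_add_sq {M : ℝ} (hM : 1 ≤ M) :
    ∑' n : ℕ, 1 / (M ^ 2 + (2 * (n:ℝ) + 1) ^ 2) ≤ (π / 4 + 1 / 2) / M := by
  have hM0 : 0 < M := lt_of_lt_of_le one_pos hM
  have hπ := Real.pi_pos
  apply Real.tsum_le_of_sum_range_le (fun n => by positivity)
  intro N
  set G : ℕ → ℝ := fun i => Real.arctan ((2 * (i:ℝ) + 1) / M) with hG
  have step : ∀ i : ℕ, 1 / (M ^ 2 + (2 * ((i:ℝ) + 1) + 1) ^ 2)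
      ≤ 1 / (2 * M) * (G (i + 1) - G i) := by
    intro i
    have h := arctan_step (a := (2 * (i:ℝ) + 1) / M) (b := (2 * (i:ℝ) + 3) / M)
      (by positivity) (by gcongr; linarith)
    have hGi : G (i + 1) = Real.arctan ((2 * (i:ℝ) + 3) / M) := by
      simp only [hG]; push_cast; ring_nf
    rw [hGi]
    have hlhs : ((2 * (i:ℝ) + 3) / M - (2 * (i:ℝ) + 1) / M) / (1 + ((2 * (i:ℝ) + 3) / M) ^ 2)
        = 2 * M / (M ^ 2 + (2 * (i:ℝ) + 3) ^ 2) := by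
      field_simp
      ring
    rw [hlhs] at h
    have : 1 / (M ^ 2 + (2 * ((i:ℝ) + 1) + 1) ^ 2)
        = 1 / (2 * M) * (2 * M / (M ^ 2 + (2 * (i:ℝ) + 3) ^ 2)) := by
      rw [show 2 * ((i:ℝ) + 1) + 1 = 2 * (i:ℝ) + 3 by ring]
      field_simp
    rw [this]
    have h2M : 0 < 1 / (2 * M) := by positivity
    exact mul_le_mul_of_nonneg_left h h2M.le
  cases N with
  | zero => simp; positivity
  | succ K =>
    rw [Finset.sum_range_succ']
    push_cast
    have h1 : ∑ i ∈ Finset.range K, 1 / (M ^ 2 + (2 * ((i:ℝ) + 1) + 1) ^ 2)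
        ≤ ∑ i ∈ Finset.range K, 1 / (2 * M) * (G (i + 1) - G i) :=
      Finset.sum_le_sum (fun i _ => step i)
    have h2 : ∑ i ∈ Finset.range K, 1 / (2 * M) * (G (i + 1) - G i)
        = 1 / (2 * M) * (G K - G 0) := by
      rw [← Finset.mul_sum, Finset.sum_range_sub]
    have h3 : G K - G 0 ≤ π / 2 := by
      have := Real.arctan_lt_pi_div_two ((2 * (K:ℝ) + 1) / M)
      have h0 : 0 ≤ G 0 := by
        rw [← Real.arctan_zero]
        exact Real.arctan_strictMono.monotone (by positivity)
      simp only [hG] at *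
      linarith
    have h4 : 1 / (M ^ 2 + (2 * (0:ℝ) + 1) ^ 2) ≤ 1 / (2 * M) := by
      apply div_le_div_of_nonneg_left one_pos.le (by positivity) ?_ |>.trans_eq rfl
      nlinarith
    calc ∑ i ∈ Finset.range K, 1 / (M ^ 2 + (2 * ((i:ℝ) + 1) + 1) ^ 2)
          + 1 / (M ^ 2 + (2 * (0:ℝ) + 1) ^ 2)
        ≤ 1 / (2 * M) * (G K - G 0) + 1 / (2 * M) := by
          have := h1.trans h2.le
          linarith
      _ ≤ 1 / (2 * M) * (π / 2) + 1 / (2 * M) := by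
          have h2M : 0 ≤ 1 / (2 * M) := by positivity
          nlinarith
      _ = (π / 4 + 1 / 2) / M := by
          field_simp
          ring

lemma sum_odd_rpow {δ : ℝ} (hδ : 0 < δ) :
    ∑' m : ℕ, (2 * (m:ℝ) + 1) ^ (-(1 + δ)) ≤ 1 + 1 / (2 * δ) := by
  apply Real.tsum_le_of_sum_range_le (fun n => by positivity)
  intro N
  set H : ℕ → ℝ := fun i => (2 * (i:ℝ) + 1) ^ (-δ) with hH
  have step : ∀ i : ℕ, (2 * ((i:ℝ) + 1) + 1) ^ (-(1 + δ))
      ≤ 1 / (2 * δ) * (H i - H (i + 1)) := by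
    intro i
    have h := rpow_step (a := 2 * (i:ℝ) + 1) (b := 2 * (i:ℝ) + 3) hδ (by positivity)
      (by linarith)
    have hHi : H (i + 1) = (2 * (i:ℝ) + 3) ^ (-δ) := by
      simp only [hH]; push_cast; ring_nf
    rw [hHi, show 2 * ((i:ℝ) + 1) + 1 = 2 * (i:ℝ) + 3 by ring]
    rw [show 2 * (i:ℝ) + 3 - (2 * (i:ℝ) + 1) = 2 by ring] at h
    have hHi0 : H i = (2 * (i:ℝ) + 1) ^ (-δ) := rfl
    rw [hHi0]
    have h2 : (2 * (i:ℝ) + 3) ^ (-(1 + δ))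
        = 1 / (2 * δ) * (δ * 2 * (2 * (i:ℝ) + 3) ^ (-(1 + δ))) := by
      field_simp
    rw [h2]
    exact mul_le_mul_of_nonneg_left h (by positivity)
  cases N with
  | zero => simp; positivity
  | succ K =>
    rw [Finset.sum_range_succ']
    push_cast
    have h1 : ∑ i ∈ Finset.range K, (2 * ((i:ℝ) + 1) + 1) ^ (-(1 + δ))
        ≤ ∑ i ∈ Finset.range K, 1 / (2 * δ) * (H i - H (i + 1)) :=
      Finset.sum_le_sum (fun i _ => step i)
    have h2 : ∑ i ∈ Finset.range K, 1 / (2 * δ) * (H i - H (i + 1))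
        = 1 / (2 * δ) * (H 0 - H K) := by
      rw [← Finset.mul_sum, Finset.sum_range_sub' H]
    have h3 : H 0 - H K ≤ 1 := by
      have hK : 0 ≤ H K := Real.rpow_nonneg (by positivity) _
      have h0 : H 0 = 1 := by
        simp only [hH]
        norm_num
      linarith
    have h4 : (2 * (0:ℝ) + 1) ^ (-(1 + δ)) = 1 := by norm_num
    have h5 : 0 < 1 / (2 * δ) := by positivity
    calc ∑ i ∈ Finset.range K, (2 * ((i:ℝ) + 1) + 1) ^ (-(1 + δ))
          + (2 * (0:ℝ) + 1) ^ (-(1 + δ))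
        ≤ 1 / (2 * δ) * (H 0 - H K) + 1 := by rw [h4]; linarith [h1.trans h2.le]
      _ ≤ 1 / (2 * δ) * 1 + 1 := by nlinarith
      _ = 1 + 1 / (2 * δ) := by ring

lemma summable_odd_rpow {δ : ℝ} (hδ : 0 < δ) :
    Summable (fun m : ℕ => (2 * (m:ℝ) + 1) ^ (-(1 + δ))) := by
  have hbase : Summable (fun m : ℕ => ((m:ℝ) + 1) ^ (-(1 + δ))) := by
    have h := Real.summable_nat_rpow (p := -(1 + δ)).mpr (by linarith)
    have := (summable_nat_add_iff (f := fun n : ℕ => ((n:ℝ)) ^ (-(1 + δ))) 1).mpr h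
    apply this.congr
    intro n
    push_cast
    ring_nf
  apply Summable.of_nonneg_of_le (fun m => by positivity) (fun m => ?_) hbase
  exact Real.rpow_le_rpow_of_nonpos (by positivity) (by linarith [Nat.cast_nonneg (α := ℝ) m])
    (by linarith)

lemma summable_inv_add_sq {M : ℝ} (hM : 1 ≤ M) :
    Summable (fun n : ℕ => 1 / (M ^ 2 + (2 * (n:ℝ) + 1) ^ 2)) := by
  have hbase : Summable (fun n : ℕ => 1 / ((n:ℝ) + 1) ^ 2) := by
    have h := Real.summable_one_div_nat_pow (p := 2).mpr one_lt_two
    have := (summable_nat_add_iff (f := fun n : ℕ => 1 / ((n:ℝ)) ^ 2) 1).mpr h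
    apply this.congr
    intro n
    push_cast
    ring_nf
  apply Summable.of_nonneg_of_le (fun n => by positivity) (fun n => ?_) hbase
  have hM0 : 0 < M := lt_of_lt_of_le one_pos hM
  have hn : (0:ℝ) ≤ (n:ℝ) := Nat.cast_nonneg n
  apply div_le_div_of_nonneg_left one_pos.le (by positivity)
  nlinarith

set_option maxHeartbeats 1000000 in
lemma main_bound {u v δ : ℝ} (hu : 0 < u) (hv : 0 ≤ v) (hδ : 0 < δ) (hδ1 : δ ≤ 1) :
    V u v ≤ 32 / π ^ (2 + δ) * (π / 4 + 1 / 2) * (1 + 1 / (2 * δ)) * u ^ (1 - δ) * v := by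
  have hπ := Real.pi_pos
  set C : ℝ := 32 / π ^ (2 + δ) * u ^ (1 - δ) * v with hC
  have hC0 : 0 ≤ C := by
    apply mul_nonneg (mul_nonneg ?_ ?_) hv
    · positivity
    · exact Real.rpow_nonneg hu.le _
  -- the comparison term
  set T : ℕ → ℕ → ℝ := fun m n => C * (2 * (m:ℝ) + 1) ^ (-δ)
      * (1 / ((2 * (m:ℝ) + 1) ^ 2 + (2 * (n:ℝ) + 1) ^ 2)) with hT
  have hT0 : ∀ m n, 0 ≤ T m n := by
    intro m n
    apply mul_nonneg (mul_nonneg hC0 (Real.rpow_nonneg (by positivity) _)) (by positivity)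
  -- pointwise bound
  have hbound : ∀ m n : ℕ, |Vterm u v m n| ≤ T m n := by
    intro m n
    have hM : (0:ℝ) < 2 * (m:ℝ) + 1 := by positivity
    have hN : (0:ℝ) < 2 * (n:ℝ) + 1 := by positivity
    have hVc : 0 ≤ Vcoef m n := by
      unfold Vcoef; positivity
    have hs1 : |Real.sin ((2 * (m:ℝ) + 1) * π * u)| ≤ ((2 * (m:ℝ) + 1) * π * u) ^ (1 - δ) :=
      abs_sin_le_rpow (by positivity) (by linarith) (by linarith)
    have hs2 : |Real.sin ((2 * (n:ℝ) + 1) * π * v)| ≤ (2 * (n:ℝ) + 1) * π * v := by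
      calc |Real.sin ((2 * (n:ℝ) + 1) * π * v)| ≤ |(2 * (n:ℝ) + 1) * π * v| :=
            Real.abs_sin_le_abs
        _ = (2 * (n:ℝ) + 1) * π * v := abs_of_nonneg (by positivity)
    have habs : |Vterm u v m n| = Vcoef m n * |Real.sin ((2 * (m:ℝ) + 1) * π * u)|
        * |Real.sin ((2 * (n:ℝ) + 1) * π * v)| := by
      unfold Vterm
      rw [abs_mul, abs_mul, abs_of_nonneg hVc]
    rw [habs]
    have hstep : Vcoef m n * |Real.sin ((2 * (m:ℝ) + 1) * π * u)|
        * |Real.sin ((2 * (n:ℝ) + 1) * π * v)|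
        ≤ Vcoef m n * (((2 * (m:ℝ) + 1) * π * u) ^ (1 - δ)) * ((2 * (n:ℝ) + 1) * π * v) := by
      apply mul_le_mul
      · exact mul_le_mul_of_nonneg_left hs1 hVc
      · exact hs2
      · exact abs_nonneg _
      · exact mul_nonneg hVc (Real.rpow_nonneg (by positivity) _)
    refine hstep.trans (le_of_eq ?_)
    -- algebraic identity
    have e1 : ((2 * (m:ℝ) + 1) * π * u) ^ (1 - δ)
        = (2 * (m:ℝ) + 1) ^ (1 - δ) * π ^ (1 - δ) * u ^ (1 - δ) := by
      rw [Real.mul_rpow (by positivity) hu.le, Real.mul_rpow (by positivity) hπ.le]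
    have e2 : (2 * (m:ℝ) + 1) ^ (1 - δ) = (2 * (m:ℝ) + 1) * (2 * (m:ℝ) + 1) ^ (-δ) := by
      rw [show (1 - δ) = 1 + (-δ) by ring, Real.rpow_add hM, Real.rpow_one]
    have hπ4 : π ^ (1 - δ) * π ^ (2 + δ) * π = π ^ 4 := by
      have e3 : π ^ (1 - δ) * π ^ (2 + δ) = π ^ ((1 - δ) + (2 + δ)) := (Real.rpow_add hπ _ _).symm
      rw [e3, show (1 - δ) + (2 + δ) = ((3:ℕ):ℝ) by norm_num, Real.rpow_natCast]
      ring
    have hsplit : 32 / π ^ (2 + δ) = 32 * π ^ (1 - δ) * π / π ^ 4 := by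
      rw [div_eq_div_iff (by positivity) (by positivity)]
      linarith [hπ4]
    simp only [hT]
    rw [e1, e2, hC, hsplit]
    unfold Vcoef
    have hd2 : (2 * (m:ℝ) + 1) ^ 2 + (2 * (n:ℝ) + 1) ^ 2 ≠ 0 := by positivity
    field_simp
  -- summability of the comparison
  have hTsum : ∀ m : ℕ, Summable (fun n => T m n) := by
    intro m
    have := (summable_inv_add_sq (M := 2 * (m:ℝ) + 1)
      (by have : (0:ℝ) ≤ (m:ℝ) := Nat.cast_nonneg m; linarith)).mul_left
      (C * (2 * (m:ℝ) + 1) ^ (-δ))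
    apply this.congr
    intro n
    simp [hT, mul_assoc]
  have hVsum : ∀ m : ℕ, Summable (fun n => Vterm u v m n) := by
    intro m
    apply Summable.of_norm_bounded (hTsum m)
    intro n
    rw [Real.norm_eq_abs]
    exact hbound m n
  -- inner bound
  set g : ℕ → ℝ := fun m => C * (π / 4 + 1 / 2) * (2 * (m:ℝ) + 1) ^ (-(1 + δ)) with hg
  have habs_inner : ∀ m : ℕ, |∑' n, Vterm u v m n| ≤ g m := by
    intro m
    have hM : (0:ℝ) < 2 * (m:ℝ) + 1 := by positivity
    have hM1 : (1:ℝ) ≤ 2 * (m:ℝ) + 1 := by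
      have : (0:ℝ) ≤ (m:ℝ) := Nat.cast_nonneg m
      linarith
    have hAbsSum : Summable (fun n => |Vterm u v m n|) :=
      Summable.of_nonneg_of_le (fun n => abs_nonneg _) (hbound m) (hTsum m)
    have h1 : |∑' n, Vterm u v m n| ≤ ∑' n, |Vterm u v m n| := by
      have := norm_tsum_le_tsum_norm (f := fun n => Vterm u v m n)
        (by simpa [Real.norm_eq_abs] using hAbsSum)
      simpa [Real.norm_eq_abs] using this
    have h2 : ∑' n, |Vterm u v m n| ≤ ∑' n, T m n :=
      Summable.tsum_le_tsum (hbound m) hAbsSum (hTsum m)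
    have h3 : ∑' n, T m n = C * (2 * (m:ℝ) + 1) ^ (-δ)
        * ∑' n : ℕ, 1 / ((2 * (m:ℝ) + 1) ^ 2 + (2 * (n:ℝ) + 1) ^ 2) := by
      simp only [hT]
      exact tsum_mul_left
    have h4 : C * (2 * (m:ℝ) + 1) ^ (-δ)
        * ∑' n : ℕ, 1 / ((2 * (m:ℝ) + 1) ^ 2 + (2 * (n:ℝ) + 1) ^ 2)
        ≤ C * (2 * (m:ℝ) + 1) ^ (-δ) * ((π / 4 + 1 / 2) / (2 * (m:ℝ) + 1)) := by
      apply mul_le_mul_of_nonneg_left (sum_inv_add_sq hM1)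
      exact mul_nonneg hC0 (Real.rpow_nonneg hM.le _)
    have h5 : C * (2 * (m:ℝ) + 1) ^ (-δ) * ((π / 4 + 1 / 2) / (2 * (m:ℝ) + 1)) = g m := by
      simp only [hg]
      rw [show -(1 + δ) = -δ + (-1) by ring, Real.rpow_add hM, Real.rpow_neg_one]
      field_simp
    calc |∑' n, Vterm u v m n| ≤ ∑' n, |Vterm u v m n| := h1
      _ ≤ ∑' n, T m n := h2
      _ = _ := h3
      _ ≤ _ := h4
      _ = g m := h5
  have hgsum : Summable g := ((summable_odd_rpow hδ).mul_left (C * (π / 4 + 1 / 2)))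
  have hinner_sum : Summable (fun m => ∑' n, Vterm u v m n) := by
    apply Summable.of_norm_bounded hgsum
    intro m
    rw [Real.norm_eq_abs]
    exact habs_inner m
  have hfinal : V u v ≤ ∑' m, g m := by
    unfold V
    exact Summable.tsum_le_tsum (fun m => (le_abs_self _).trans (habs_inner m)) hinner_sum hgsum
  have hgval : ∑' m, g m = C * (π / 4 + 1 / 2) * ∑' m : ℕ, (2 * (m:ℝ) + 1) ^ (-(1 + δ)) := by
    simp only [hg]
    exact tsum_mul_left
  have hglast : ∑' m, g m ≤ C * (π / 4 + 1 / 2) * (1 + 1 / (2 * δ)) := by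
    rw [hgval]
    apply mul_le_mul_of_nonneg_left (sum_odd_rpow hδ)
    apply mul_nonneg hC0
    positivity
  refine hfinal.trans (hglast.trans (le_of_eq ?_))
  rw [hC]
  ring

end VAux

open VAux in
set_option maxHeartbeats 1000000 in
/-- For all `u ∈ (0,1]` and `v ∈ [0,1]` one has `V(u,v) ≤ 8uv(1 + log(1/u))`. -/
theorem stmt_5 (u v : ℝ) (hu : u ∈ Ioc (0:ℝ) 1) (hv : v ∈ Icc (0:ℝ) 1) :
    V u v ≤ 8 * u * v * (1 + Real.log (1 / u)) := by
  obtain ⟨hu0, hu1⟩ := hu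
  obtain ⟨hv0, hv1⟩ := hv
  have hπ := Real.pi_pos
  have hπgt := Real.pi_gt_d6
  have hπlt := Real.pi_lt_d2
  have hexp1 := Real.exp_one_lt_d9
  set t := Real.log (1 / u) with ht
  have hlogu : t = -Real.log u := by rw [ht, one_div, Real.log_inv]
  have ht0 : 0 ≤ t := by
    rw [hlogu]
    linarith [Real.log_nonpos hu0.le hu1]
  have huet : u * Real.exp t = 1 := by
    rw [ht, Real.exp_log (by positivity : (0:ℝ) < 1 / u)]
    field_simp
  have hL : (2:ℝ) ≤ Real.log 9 := by
    rw [Real.le_log_iff_exp_le (by norm_num)]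
    rw [show (2:ℝ) = 1 + 1 by norm_num, Real.exp_add]
    nlinarith [Real.exp_pos 1]
  have hLpos : (0:ℝ) < Real.log 9 := by linarith
  by_cases hcase : 1 / 9 ≤ u
  · -- large u : use δ = 1
    have hb := main_bound (u := u) (v := v) (δ := 1) hu0 hv0 one_pos le_rfl
    have hV2 : V u v ≤ 2 * v := by
      refine hb.trans ?_
      have h0 : u ^ ((1:ℝ) - 1) = 1 := by norm_num
      have hπ3 : π ^ ((2:ℝ) + 1) = π ^ 3 := by
        rw [show ((2:ℝ) + 1) = ((3:ℕ):ℝ) by norm_num, Real.rpow_natCast]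
      rw [h0, hπ3]
      have hπ3l : (31:ℝ) < π ^ 3 := by
        nlinarith [hπgt, hπ, sq_nonneg (π - 3.141592)]
      have hkey : 32 / π ^ 3 * (π / 4 + 1 / 2) * (1 + 1 / (2 * 1)) ≤ 2 := by
        rw [div_mul_eq_mul_div, div_mul_eq_mul_div, div_le_iff₀ (by positivity)]
        nlinarith [hπ3l, hπlt]
      nlinarith [mul_le_mul_of_nonneg_right hkey hv0]
    have htL : t ≤ Real.log 9 := by
      rw [ht]
      apply Real.log_le_log (by positivity)
      rw [div_le_iff₀ hu0]
      nlinarith [hcase]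
    have hchord : Real.exp t ≤ 1 + 4 * t := by
      have hc := convexOn_exp.2 (Set.mem_univ (0:ℝ)) (Set.mem_univ (Real.log 9))
        (show (0:ℝ) ≤ 1 - t / Real.log 9 by rw [sub_nonneg, div_le_one hLpos]; exact htL)
        (show (0:ℝ) ≤ t / Real.log 9 by positivity)
        (show (1 - t / Real.log 9) + t / Real.log 9 = 1 by ring)
      simp only [smul_eq_mul, mul_zero, zero_add, Real.exp_zero, mul_one] at hc
      rw [div_mul_cancel₀ t (ne_of_gt hLpos), Real.exp_log (by norm_num : (0:ℝ) < 9)] at hc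
      have h8 : t / Real.log 9 * 8 ≤ 4 * t := by
        rw [div_mul_eq_mul_div, div_le_iff₀ hLpos]
        nlinarith [ht0, hL]
      nlinarith [hc, h8]
    have hkey2 : 2 ≤ 8 * u * (1 + t) := by
      have h2e : 2 * Real.exp t ≤ 8 * (1 + t) := by nlinarith [hchord, ht0]
      have hm := mul_le_mul_of_nonneg_left h2e hu0.le
      nlinarith [huet, hu0, ht0, hm]
    calc V u v ≤ 2 * v := hV2
      _ ≤ 8 * u * v * (1 + t) := by nlinarith [mul_le_mul_of_nonneg_right hkey2 hv0]
  · -- small u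
    push_neg at hcase
    have h9 : (9:ℝ) < 1 / u := by
      rw [lt_div_iff₀ hu0]; nlinarith
    have ht9 : Real.log 9 < t := by
      rw [ht]; exact Real.log_lt_log (by norm_num) h9
    have hlogπ1 : 1 ≤ Real.log π := by
      rw [Real.le_log_iff_exp_le hπ]
      linarith
    have hgap : 1 ≤ Real.log 9 - Real.log π := by
      have h1 : Real.log 9 - Real.log π = Real.log (9 / π) := by
        rw [Real.log_div (by norm_num) (ne_of_gt hπ)]
      rw [h1, Real.le_log_iff_exp_le (by positivity), le_div_iff₀ hπ]
      nlinarith [Real.exp_pos 1]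
    set w := t - Real.log π with hw
    have hw1 : 1 ≤ w := by rw [hw]; linarith
    have hwpos : (0:ℝ) < w := by linarith
    set δ := w⁻¹ with hδdef
    have hδ0 : 0 < δ := by positivity
    have hδ1 : δ ≤ 1 := by rw [hδdef]; exact inv_le_one_of_one_le₀ hw1
    have hδw : δ * w = 1 := by rw [hδdef]; field_simp
    have hb := main_bound (u := u) (v := v) hu0 hv0 hδ0 hδ1
    have hδprod : δ * t - δ * Real.log π = 1 := by
      have h2 := hδw
      rw [hw] at h2
      linear_combination h2
    have e_u : u ^ (1 - δ) = Real.exp (t * δ) * u := by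
      rw [Real.rpow_def_of_pos hu0]
      have hlogu2 : Real.log u = -t := by rw [hlogu]; ring
      rw [hlogu2, show -t * (1 - δ) = t * δ + -t by ring, Real.exp_add]
      congr 1
      rw [← hlogu2]
      exact Real.exp_log hu0
    have e_pi : π ^ ((2:ℝ) + δ) = π ^ 2 * Real.exp (Real.log π * δ) := by
      rw [Real.rpow_def_of_pos hπ,
        show Real.log π * (2 + δ) = (Real.log π + Real.log π) + Real.log π * δ by ring,
        Real.exp_add, Real.exp_add, Real.exp_log hπ]
      ring
    have e_ratio : Real.exp (t * δ) = Real.exp 1 * Real.exp (Real.log π * δ) := by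
      rw [← Real.exp_add]
      congr 1
      linear_combination hδprod
    have e_half : 1 + 1 / (2 * δ) = 1 + w / 2 := by
      rw [hδdef]
      field_simp
    have hbeq : 32 / π ^ ((2:ℝ) + δ) * (π / 4 + 1 / 2) * (1 + 1 / (2 * δ)) * u ^ (1 - δ) * v
        = 32 * (π / 4 + 1 / 2) * (1 + w / 2) * Real.exp 1 / π ^ 2 * u * v := by
      rw [e_u, e_pi, e_ratio, e_half]
      have hE : Real.exp (Real.log π * δ) ≠ 0 := Real.exp_ne_zero _
      field_simp
    rw [hbeq] at hb
    refine hb.trans ?_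
    have hQ : 32 * (π / 4 + 1 / 2) * (1 + w / 2) * Real.exp 1 / π ^ 2 ≤ 8 * (1 + t) := by
      rw [div_le_iff₀ (by positivity)]
      have hA : 32 * (π / 4 + 1 / 2) * Real.exp 1 ≤ 16 * π ^ 2 := by
        nlinarith [hπgt, hπlt, Real.exp_pos 1]
      have htw : t = w + Real.log π := by rw [hw]; ring
      nlinarith [mul_le_mul_of_nonneg_right hA (show (0:ℝ) ≤ 1 + w / 2 by linarith),
        hw1, hlogπ1, sq_nonneg π]
    calc 32 * (π / 4 + 1 / 2) * (1 + w / 2) * Real.exp 1 / π ^ 2 * u * v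
        ≤ 8 * (1 + t) * u * v := by
          nlinarith [mul_le_mul_of_nonneg_right hQ (mul_nonneg hu0.le hv0)]
      _ = 8 * u * v * (1 + t) := by ring
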